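/- For α ≥ 1, the operator T contracts the α-th moment: if p is a probability density on [0,∞) with M_α(p) = ∫_0^∞ x^α p(x) dx < ∞, then M_α(T[p]) ≤ (2^α/(α+1)) M_α(p). -/

import Mathlib

open MeasureTheory Real Set
open scoped ENNReal

noncomputable def SL (p : ℝ → ℝ) (x : ℝ) : ℝ≥0∞ := ∫⁻ u in Set.Ioi x, ENNReal.ofReal (p u / u)

lemma SL_anti (p : ℝ → ℝ) : Antitone (SL p) := fun x y hxy =>
  lintegral_mono' (Measure.restrict_mono (Ioi_subset_Ioi hxy) le_rfl) le_rfl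

lemma SL_meas (p : ℝ → ℝ) : Measurable (SL p) := (SL_anti p).measurable

lemma shift_lint (f : ℝ → ℝ≥0∞) (v : ℝ) :
    ∫⁻ x in Ioi v, f x = ∫⁻ u in Ioi (0:ℝ), f (u + v) := by
  rw [← lintegral_indicator measurableSet_Ioi, ← lintegral_indicator measurableSet_Ioi,
    ← lintegral_add_right_eq_self (fun x => (Ioi v).indicator f x) v]
  congr 1
  ext u
  by_cases h : 0 < u
  · rw [indicator_of_mem (by simpa using h), indicator_of_mem (by simp [h])]
  · rw [indicator_of_notMem (by simpa using h), indicator_of_notMem (by simp [h])]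

lemma swap_tri (k : ℝ → ℝ → ℝ≥0∞) (hk : Measurable (Function.uncurry k)) :
    ∫⁻ b in Ioi (0:ℝ), ∫⁻ a in Ioo 0 b, k a b = ∫⁻ a in Ioi (0:ℝ), ∫⁻ b in Ioi a, k a b := by
  set E : Set (ℝ × ℝ) := {q | 0 < q.1 ∧ q.1 < q.2} with hE
  have hEm : MeasurableSet E :=
    (measurableSet_lt measurable_const measurable_fst).inter (measurableSet_lt measurable_fst measurable_snd)
  have h1 : ∫⁻ b in Ioi (0:ℝ), ∫⁻ a in Ioo 0 b, k a b
      = ∫⁻ b, ∫⁻ a, E.indicator (Function.uncurry k) (a, b) := by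
    rw [← lintegral_indicator measurableSet_Ioi]
    congr 1; ext b
    by_cases hb : 0 < b
    · rw [indicator_of_mem (by simpa using hb)]
      have : ∀ a, E.indicator (Function.uncurry k) (a, b)
          = (Ioo (0:ℝ) b).indicator (fun a => k a b) a := by
        intro a; by_cases ha : a ∈ Ioo (0:ℝ) b
        · rw [indicator_of_mem ha, indicator_of_mem]; · rfl
          · exact ⟨ha.1, ha.2⟩
        · rw [indicator_of_notMem ha, indicator_of_notMem]
          intro h; exact ha ⟨h.1, h.2⟩
      simp_rw [this]
      rw [lintegral_indicator measurableSet_Ioo]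
    · rw [indicator_of_notMem (by simpa using hb)]
      have : ∀ a, E.indicator (Function.uncurry k) (a, b) = 0 := by
        intro a
        apply indicator_of_notMem
        intro h; exact hb (lt_trans h.1 h.2)
      simp [this]
  have h2 : ∫⁻ a in Ioi (0:ℝ), ∫⁻ b in Ioi a, k a b
      = ∫⁻ a, ∫⁻ b, E.indicator (Function.uncurry k) (a, b) := by
    rw [← lintegral_indicator measurableSet_Ioi]
    congr 1; ext a
    by_cases ha : 0 < a
    · rw [indicator_of_mem (by simpa using ha)]
      have : ∀ b, E.indicator (Function.uncurry k) (a, b)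
          = (Ioi a).indicator (fun b => k a b) b := by
        intro b; by_cases hb : b ∈ Ioi a
        · rw [indicator_of_mem hb, indicator_of_mem]; · rfl
          · exact ⟨ha, hb⟩
        · rw [indicator_of_notMem hb, indicator_of_notMem]
          intro h; exact hb h.2
      simp_rw [this]
      rw [lintegral_indicator measurableSet_Ioi]
    · rw [indicator_of_notMem (by simpa using ha)]
      have : ∀ b, E.indicator (Function.uncurry k) (a, b) = 0 := by
        intro b
        apply indicator_of_notMem
        intro h; exact ha h.1
      simp [this]
  rw [h1, h2]
  have hm : AEMeasurable (Function.uncurry fun b a => E.indicator (Function.uncurry k) (a, b))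
      ((volume : Measure ℝ).prod volume) := by
    have : (Function.uncurry fun b a => E.indicator (Function.uncurry k) (a, b))
        = (E.indicator (Function.uncurry k)) ∘ Prod.swap := rfl
    rw [this]
    exact ((hk.indicator hEm).comp measurable_swap).aemeasurable
  exact lintegral_lintegral_swap hm

noncomputable def S (p : ℝ → ℝ) (x : ℝ) : ℝ := ∫ u in Set.Ioi x, p u / u

-- pointwise rpow inequality
lemma rpow_add_le (α : ℝ) (hα : 1 ≤ α) {u v : ℝ} (hu : 0 ≤ u) (hv : 0 ≤ v) :
    (u + v) ^ α ≤ 2 ^ (α - 1) * (u ^ α + v ^ α) := by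
  have h := (convexOn_rpow hα).2 (mem_Ici.2 hu) (mem_Ici.2 hv)
    (by norm_num : (0:ℝ) ≤ 1/2) (by norm_num : (0:ℝ) ≤ 1/2) (by norm_num)
  simp only [smul_eq_mul] at h
  have h2 : (u + v) ^ α = 2 ^ α * (1/2 * u + 1/2 * v) ^ α := by
    rw [← Real.mul_rpow (by norm_num) (by linarith)]
    ring_nf
  have h3 : (2:ℝ) ^ (α - 1) = 2 ^ α / 2 := by
    rw [Real.rpow_sub (by norm_num), Real.rpow_one]
  rw [h2, h3]
  calc 2 ^ α * (1/2 * u + 1/2 * v) ^ α ≤ 2 ^ α * (1/2 * u ^ α + 1/2 * v ^ α) :=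
        mul_le_mul_of_nonneg_left h (Real.rpow_nonneg (by norm_num) α)
    _ = 2 ^ α / 2 * (u ^ α + v ^ α) := by ring

lemma ofReal_S_eq (p : ℝ → ℝ) (hpnn : ∀ x, 0 ≤ p x)
    (hS : IntegrableOn (fun u => p u / u) (Set.Ioi 0)) {x : ℝ} (hx : 0 ≤ x) :
    ENNReal.ofReal (S p x) = SL p x := by
  apply ofReal_integral_eq_lintegral_ofReal
  · exact hS.mono_set (fun u hu => lt_of_le_of_lt hx hu)
  · refine (ae_restrict_iff' measurableSet_Ioi).2 (ae_of_all _ fun u hu => ?_)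
    exact div_nonneg (hpnn u) (le_of_lt (lt_of_le_of_lt hx hu))

lemma S_nonneg (p : ℝ → ℝ) (hpnn : ∀ x, 0 ≤ p x) {x : ℝ} (hx : 0 ≤ x) : 0 ≤ S p x :=
  setIntegral_nonneg measurableSet_Ioi fun u hu =>
    div_nonneg (hpnn u) (le_of_lt (lt_of_le_of_lt hx hu))

lemma lintegral_SL_eq_one (p : ℝ → ℝ) (hpm : Measurable p) (hpnn : ∀ x, 0 ≤ p x)
    (hpint : IntegrableOn p (Set.Ioi 0)) (hp1 : ∫ x in Set.Ioi (0:ℝ), p x = 1) :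
    ∫⁻ v in Ioi (0:ℝ), SL p v = 1 := by
  have hk : Measurable (Function.uncurry fun (_ : ℝ) (b : ℝ) => ENNReal.ofReal (p b / b)) :=
    (ENNReal.measurable_ofReal.comp ((hpm.comp measurable_id).div measurable_id)).comp measurable_snd
  have h := swap_tri (fun _ b => ENNReal.ofReal (p b / b)) hk
  have hA : ∫⁻ v in Ioi (0:ℝ), SL p v
      = ∫⁻ a in Ioi (0:ℝ), ∫⁻ b in Ioi a, ENNReal.ofReal (p b / b) := rfl
  rw [hA, ← h]
  have h2 : ∫⁻ b in Ioi (0:ℝ), ∫⁻ _ in Ioo (0:ℝ) b, ENNReal.ofReal (p b / b)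
      = ∫⁻ b in Ioi (0:ℝ), ENNReal.ofReal (p b) := by
    refine lintegral_congr_ae ((ae_restrict_iff' measurableSet_Ioi).2 (ae_of_all _ fun b hb => ?_))
    show (∫⁻ _ in Ioo (0:ℝ) b, ENNReal.ofReal (p b / b)) = ENNReal.ofReal (p b)
    rw [setLIntegral_const, Real.volume_Ioo, ← ENNReal.ofReal_mul (div_nonneg (hpnn b) hb.le)]
    congr 1
    rw [sub_zero, div_mul_cancel₀ _ (ne_of_gt (mem_Ioi.1 hb))]
  rw [h2, ← ofReal_integral_eq_lintegral_ofReal hpint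
    ((ae_restrict_iff' measurableSet_Ioi).2 (ae_of_all _ fun b _ => hpnn b)), hp1,
    ENNReal.ofReal_one]

lemma lintegral_rpow_Ioo (α : ℝ) (hα : 1 ≤ α) {w : ℝ} (hw : 0 < w) :
    ∫⁻ u in Ioo (0:ℝ) w, ENNReal.ofReal (u ^ α) = ENNReal.ofReal (w ^ (α + 1) / (α + 1)) := by
  have hint : IntegrableOn (fun u : ℝ => u ^ α) (Ioc 0 w) :=
    (intervalIntegral.intervalIntegrable_rpow' (by linarith : (-1:ℝ) < α)).1
  rw [Measure.restrict_congr_set Ioo_ae_eq_Ioc,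
    ← ofReal_integral_eq_lintegral_ofReal hint
      ((ae_restrict_iff' measurableSet_Ioc).2 (ae_of_all _ fun u hu => Real.rpow_nonneg hu.1.le α))]
  congr 1
  rw [← intervalIntegral.integral_of_le hw.le, integral_rpow (Or.inl (by linarith))]
  rw [Real.zero_rpow (by linarith : α + 1 ≠ 0)]
  ring

lemma lintegral_rpow_SL (p : ℝ → ℝ) (α : ℝ) (hα : 1 ≤ α) (hpm : Measurable p)
    (hpnn : ∀ x, 0 ≤ p x) (hM : IntegrableOn (fun x => x ^ α * p x) (Set.Ioi 0)) :
    ∫⁻ u in Ioi (0:ℝ), ENNReal.ofReal (u ^ α) * SL p u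
      = ENNReal.ofReal (1/(α+1)) * ENNReal.ofReal (∫ x in Set.Ioi (0:ℝ), x ^ α * p x) := by
  have hk : Measurable (Function.uncurry fun (a : ℝ) (b : ℝ) =>
      ENNReal.ofReal (a ^ α) * ENNReal.ofReal (p b / b)) := by
    refine Measurable.mul (f := fun q : ℝ × ℝ => ENNReal.ofReal (q.1 ^ α))
      (g := fun q : ℝ × ℝ => ENNReal.ofReal (p q.2 / q.2)) ?_ ?_
    · exact ENNReal.measurable_ofReal.comp
        ((Real.continuous_rpow_const (le_trans zero_le_one hα)).measurable.comp measurable_fst)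
    · exact (ENNReal.measurable_ofReal.comp (hpm.div measurable_id)).comp measurable_snd
  have h1 : ∫⁻ u in Ioi (0:ℝ), ENNReal.ofReal (u ^ α) * SL p u
      = ∫⁻ a in Ioi (0:ℝ), ∫⁻ b in Ioi a, ENNReal.ofReal (a ^ α) * ENNReal.ofReal (p b / b) := by
    refine lintegral_congr fun a => ?_
    rw [SL, lintegral_const_mul' _ _ ENNReal.ofReal_ne_top]
  rw [h1, ← swap_tri _ hk]
  have h2 : ∫⁻ b in Ioi (0:ℝ), ∫⁻ a in Ioo (0:ℝ) b, ENNReal.ofReal (a ^ α) * ENNReal.ofReal (p b / b)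
      = ∫⁻ b in Ioi (0:ℝ), ENNReal.ofReal (1/(α+1)) * ENNReal.ofReal (b ^ α * p b) := by
    refine lintegral_congr_ae ((ae_restrict_iff' measurableSet_Ioi).2 (ae_of_all _ fun b hb => ?_))
    show (∫⁻ a in Ioo (0:ℝ) b, ENNReal.ofReal (a ^ α) * ENNReal.ofReal (p b / b))
        = ENNReal.ofReal (1/(α+1)) * ENNReal.ofReal (b ^ α * p b)
    rw [lintegral_mul_const' _ _ ENNReal.ofReal_ne_top, lintegral_rpow_Ioo α hα hb,
      ← ENNReal.ofReal_mul (div_nonneg (Real.rpow_nonneg (le_of_lt (mem_Ioi.1 hb)) _)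
        (by linarith)), ← ENNReal.ofReal_mul (by positivity)]
    congr 1
    rw [Real.rpow_add (mem_Ioi.1 hb) α 1, Real.rpow_one]
    have hb0 : b ≠ 0 := ne_of_gt (mem_Ioi.1 hb)
    have ha0 : α + 1 ≠ 0 := by linarith
    field_simp
  rw [h2, lintegral_const_mul' _ _ ENNReal.ofReal_ne_top,
    ← ofReal_integral_eq_lintegral_ofReal hM
      ((ae_restrict_iff' measurableSet_Ioi).2 (ae_of_all _ fun b hb =>
        mul_nonneg (Real.rpow_nonneg hb.le α) (hpnn b)))]

noncomputable def T (p : ℝ → ℝ) (x : ℝ) : ℝ := ∫ v in (0:ℝ)..x, S p (x - v) * S p v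

noncomputable def L (p : ℝ → ℝ) (s : ℝ) : ℝ := ∫ x in Set.Ioi (0:ℝ), Real.exp (-s * x) * p x

/-- T contracts the α-th moment by a factor 2^α/(α+1). -/
theorem T_moment_bound (p : ℝ → ℝ) (α : ℝ) (hα : 1 ≤ α) (hpm : Measurable p)
    (hpnn : ∀ x, 0 ≤ p x) (hpint : IntegrableOn p (Set.Ioi 0))
    (hp1 : ∫ x in Set.Ioi (0:ℝ), p x = 1)
    (hS : IntegrableOn (fun u => p u / u) (Set.Ioi 0))
    (hM : IntegrableOn (fun x => x ^ α * p x) (Set.Ioi 0)) :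
    ∫ x in Set.Ioi (0:ℝ), x ^ α * T p x
      ≤ (2 ^ α / (α + 1)) * ∫ x in Set.Ioi (0:ℝ), x ^ α * p x := by
  have hα0 : (0:ℝ) ≤ α := le_trans zero_le_one hα
  set Mα := ∫ x in Set.Ioi (0:ℝ), x ^ α * p x with hMαdef
  have hMα_nn : 0 ≤ Mα := setIntegral_nonneg measurableSet_Ioi fun x hx =>
    mul_nonneg (Real.rpow_nonneg (le_of_lt hx) α) (hpnn x)
  have hRHS_nn : 0 ≤ 2 ^ α / (α + 1) * Mα :=
    mul_nonneg (div_nonneg (Real.rpow_nonneg (by norm_num) α) (by linarith)) hMα_nn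
  by_cases hInt : Integrable (fun x => x ^ α * T p x) (volume.restrict (Set.Ioi 0))
  swap
  · rw [integral_undef hInt]; exact hRHS_nn
  have hTnn : ∀ x : ℝ, 0 ≤ x → 0 ≤ T p x := by
    intro x hx
    rw [T]
    exact intervalIntegral.integral_nonneg hx fun v hv =>
      mul_nonneg (S_nonneg p hpnn (by linarith [hv.2])) (S_nonneg p hpnn hv.1)
  have hnnae : 0 ≤ᵐ[volume.restrict (Set.Ioi 0)] fun x => x ^ α * T p x :=
    (ae_restrict_iff' measurableSet_Ioi).2 (ae_of_all _ fun x hx =>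
      mul_nonneg (Real.rpow_nonneg (le_of_lt hx) α) (hTnn x (le_of_lt hx)))
  rw [integral_eq_lintegral_of_nonneg_ae hnnae hInt.aestronglyMeasurable]
  refine ENNReal.toReal_le_of_le_ofReal hRHS_nn ?_
  -- abbreviations
  set B := ENNReal.ofReal (1/(α+1)) * ENNReal.ofReal Mα with hBdef
  have hB : ∫⁻ u in Ioi (0:ℝ), ENNReal.ofReal (u ^ α) * SL p u = B :=
    lintegral_rpow_SL p α hα hpm hpnn hM
  have hA : ∫⁻ v in Ioi (0:ℝ), SL p v = 1 := lintegral_SL_eq_one p hpm hpnn hpint hp1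
  have hrm : Measurable fun u : ℝ => u ^ α := (Real.continuous_rpow_const hα0).measurable
  set K : ℝ → ℝ → ℝ≥0∞ := fun x v => ENNReal.ofReal (x ^ α) * (SL p (x - v) * SL p v) with hKdef
  have hKm : Measurable (Function.uncurry K) := by
    apply Measurable.mul
    · exact (hrm.comp measurable_fst).ennreal_ofReal
    · exact ((SL_meas p).comp (measurable_fst.sub measurable_snd)).mul
        ((SL_meas p).comp measurable_snd)
  -- Step 1: pointwise bound via S → SL
  have step1 : ∀ x ∈ Ioi (0:ℝ), ENNReal.ofReal (x ^ α * T p x)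
      ≤ ∫⁻ v in Ioc (0:ℝ) x, K x v := by
    intro x hx
    have hx0 : (0:ℝ) < x := hx
    by_cases hi : IntervalIntegrable (fun v => S p (x - v) * S p v) volume 0 x
    · have hTeq : ENNReal.ofReal (T p x)
          = ∫⁻ v in Ioc (0:ℝ) x, ENNReal.ofReal (S p (x - v) * S p v) := by
        rw [T, intervalIntegral.integral_of_le hx0.le]
        exact ofReal_integral_eq_lintegral_ofReal hi.1
          ((ae_restrict_iff' measurableSet_Ioc).2 (ae_of_all _ fun v hv =>
            mul_nonneg (S_nonneg p hpnn (by linarith [hv.2])) (S_nonneg p hpnn hv.1.le)))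
      rw [ENNReal.ofReal_mul (Real.rpow_nonneg hx0.le α), hTeq,
        ← lintegral_const_mul' _ _ ENNReal.ofReal_ne_top]
      refine lintegral_mono_ae ((ae_restrict_iff' measurableSet_Ioc).2
        (ae_of_all _ fun v hv => ?_))
      have h1 : ENNReal.ofReal (S p (x - v) * S p v) = SL p (x - v) * SL p v := by
        rw [ENNReal.ofReal_mul (S_nonneg p hpnn (by linarith [hv.2])),
          ofReal_S_eq p hpnn hS (by linarith [hv.2]), ofReal_S_eq p hpnn hS hv.1.le]
      show ENNReal.ofReal (x ^ α) * ENNReal.ofReal (S p (x - v) * S p v) ≤ K x v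
      rw [h1]
    · have hT : T p x = 0 := by rw [T]; exact intervalIntegral.integral_undef hi
      rw [hT, mul_zero, ENNReal.ofReal_zero]
      exact zero_le
  have step2 : (∫⁻ x in Ioi (0:ℝ), ENNReal.ofReal (x ^ α * T p x))
      ≤ ∫⁻ x in Ioi (0:ℝ), ∫⁻ v in Ioc (0:ℝ) x, K x v :=
    lintegral_mono_ae ((ae_restrict_iff' measurableSet_Ioi).2 (ae_of_all _ step1))
  -- Fubini + translation
  have e1 : (∫⁻ x in Ioi (0:ℝ), ∫⁻ v in Ioc (0:ℝ) x, K x v)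
      = ∫⁻ x in Ioi (0:ℝ), ∫⁻ v in Ioo (0:ℝ) x, K x v := by
    refine lintegral_congr fun x => ?_
    rw [Measure.restrict_congr_set Ioo_ae_eq_Ioc]
  have e2 : (∫⁻ x in Ioi (0:ℝ), ∫⁻ v in Ioo (0:ℝ) x, K x v)
      = ∫⁻ v in Ioi (0:ℝ), ∫⁻ x in Ioi v, K x v :=
    swap_tri (fun v x => K x v) (hKm.comp measurable_swap)
  have e3 : (∫⁻ v in Ioi (0:ℝ), ∫⁻ x in Ioi v, K x v)
      = ∫⁻ v in Ioi (0:ℝ), ∫⁻ u in Ioi (0:ℝ), K (u + v) v :=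
    lintegral_congr fun v => shift_lint (fun x => K x v) v
  -- pointwise inequality under the double integral
  have e4 : (∫⁻ v in Ioi (0:ℝ), ∫⁻ u in Ioi (0:ℝ), K (u + v) v)
      ≤ ∫⁻ v in Ioi (0:ℝ), ∫⁻ u in Ioi (0:ℝ), ENNReal.ofReal (2 ^ (α-1)) *
          ((ENNReal.ofReal (u ^ α) + ENNReal.ofReal (v ^ α)) * (SL p u * SL p v)) := by
    refine lintegral_mono_ae ((ae_restrict_iff' measurableSet_Ioi).2
      (ae_of_all _ fun v hv => lintegral_mono_ae ((ae_restrict_iff' measurableSet_Ioi).2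
        (ae_of_all _ fun u hu => ?_))))
    have hvv : (0:ℝ) < v := hv
    have huu : (0:ℝ) < u := hu
    have hKval : K (u + v) v = ENNReal.ofReal ((u + v) ^ α) * (SL p u * SL p v) := by
      rw [hKdef]; simp only [add_sub_cancel_right]
    have hbound : ENNReal.ofReal ((u + v) ^ α)
        ≤ ENNReal.ofReal (2 ^ (α-1)) * (ENNReal.ofReal (u ^ α) + ENNReal.ofReal (v ^ α)) := by
      calc ENNReal.ofReal ((u + v) ^ α)
          ≤ ENNReal.ofReal (2 ^ (α-1) * (u ^ α + v ^ α)) :=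
            ENNReal.ofReal_le_ofReal (rpow_add_le α hα huu.le hvv.le)
        _ = ENNReal.ofReal (2 ^ (α-1)) * (ENNReal.ofReal (u ^ α) + ENNReal.ofReal (v ^ α)) := by
            rw [ENNReal.ofReal_mul (Real.rpow_nonneg (by norm_num) _),
              ENNReal.ofReal_add (Real.rpow_nonneg huu.le α) (Real.rpow_nonneg hvv.le α)]
    calc K (u + v) v = ENNReal.ofReal ((u + v) ^ α) * (SL p u * SL p v) := hKval
      _ ≤ (ENNReal.ofReal (2 ^ (α-1)) * (ENNReal.ofReal (u ^ α) + ENNReal.ofReal (v ^ α)))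
            * (SL p u * SL p v) := mul_le_mul_left hbound _
      _ = ENNReal.ofReal (2 ^ (α-1)) *
            ((ENNReal.ofReal (u ^ α) + ENNReal.ofReal (v ^ α)) * (SL p u * SL p v)) := by ring
  -- evaluate the bound integral
  have inner_calc : ∀ v ∈ Ioi (0:ℝ),
      (∫⁻ u in Ioi (0:ℝ), ENNReal.ofReal (2 ^ (α-1)) *
        ((ENNReal.ofReal (u ^ α) + ENNReal.ofReal (v ^ α)) * (SL p u * SL p v)))
      = ENNReal.ofReal (2 ^ (α-1)) * (B * SL p v + ENNReal.ofReal (v ^ α) * SL p v) := by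
    intro v hv
    rw [lintegral_const_mul' _ _ ENNReal.ofReal_ne_top]
    congr 1
    have hrw : ∀ u : ℝ, (ENNReal.ofReal (u ^ α) + ENNReal.ofReal (v ^ α)) * (SL p u * SL p v)
        = (ENNReal.ofReal (u ^ α) * SL p u) * SL p v
          + SL p u * (ENNReal.ofReal (v ^ α) * SL p v) := by intro u; ring
    simp_rw [hrw]
    rw [lintegral_add_left (f := fun u => ENNReal.ofReal (u ^ α) * SL p u * SL p v)
        ((hrm.ennreal_ofReal.mul (SL_meas p)).mul_const _),
      lintegral_mul_const (f := fun u => ENNReal.ofReal (u ^ α) * SL p u) _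
        (hrm.ennreal_ofReal.mul (SL_meas p)),
      lintegral_mul_const _ (SL_meas p), hB, hA, one_mul]
  have e5 : (∫⁻ v in Ioi (0:ℝ), ∫⁻ u in Ioi (0:ℝ), ENNReal.ofReal (2 ^ (α-1)) *
        ((ENNReal.ofReal (u ^ α) + ENNReal.ofReal (v ^ α)) * (SL p u * SL p v)))
      = ENNReal.ofReal (2 ^ (α-1)) * (B + B) := by
    rw [lintegral_congr_ae ((ae_restrict_iff' measurableSet_Ioi).2 (ae_of_all _ inner_calc))]
    rw [lintegral_const_mul' _ _ ENNReal.ofReal_ne_top]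
    congr 1
    rw [lintegral_add_left ((SL_meas p).const_mul B), lintegral_const_mul _ (SL_meas p),
      hA, hB, mul_one]
  -- final assembly
  have final : ENNReal.ofReal (2 ^ (α-1)) * (B + B) = ENNReal.ofReal (2 ^ α / (α + 1) * Mα) := by
    have h2 : (B : ℝ≥0∞) + B = ENNReal.ofReal 2 * B := by
      rw [← two_mul]
      norm_num
    have h1a : (0:ℝ) ≤ 1/(α+1) := by positivity
    rw [h2, hBdef, ← ENNReal.ofReal_mul h1a, ← ENNReal.ofReal_mul (by norm_num : (0:ℝ) ≤ 2),
      ← ENNReal.ofReal_mul (Real.rpow_nonneg (by norm_num) _)]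
    congr 1
    rw [Real.rpow_sub (by norm_num : (0:ℝ) < 2), Real.rpow_one]
    have ha0 : α + 1 ≠ 0 := by linarith
    field_simp
  calc ∫⁻ x in Ioi (0:ℝ), ENNReal.ofReal (x ^ α * T p x)
      ≤ ∫⁻ x in Ioi (0:ℝ), ∫⁻ v in Ioc (0:ℝ) x, K x v := step2
    _ = ∫⁻ v in Ioi (0:ℝ), ∫⁻ u in Ioi (0:ℝ), K (u + v) v := by rw [e1, e2, e3]
    _ ≤ ∫⁻ v in Ioi (0:ℝ), ∫⁻ u in Ioi (0:ℝ), ENNReal.ofReal (2 ^ (α-1)) *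
          ((ENNReal.ofReal (u ^ α) + ENNReal.ofReal (v ^ α)) * (SL p u * SL p v)) := e4
    _ = ENNReal.ofReal (2 ^ (α-1)) * (B + B) := e5
    _ = ENNReal.ofReal (2 ^ α / (α + 1) * Mα) := final
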